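/- Let p be an odd prime and let a, b, x be positive integers with a odd such that p^a + p^b + 1 = x². Then p ≡ 3 (mod 4) and b is even. -/
import Mathlib

lemma pow3mod4 (n : ℕ) : 3 ^ n % 4 = if Even n then 1 else 3 := by
  induction n with
  | zero => simp
  | succ n ih =>
    rw [pow_succ, Nat.mul_mod, ih]
    by_cases h : Even n <;> simp [h, Nat.even_add_one]

theorem p_mod_four_and_b_even_of_sq
    (p a b x : ℕ) (hp : p.Prime) (hodd : Odd p)
    (ha : 0 < a) (hb : 0 < b) (hx : 0 < x) (haodd : Odd a)
    (heq : p ^ a + p ^ b + 1 = x ^ 2) :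
    p % 4 = 3 ∧ Even b := by
  have hp2 : p % 2 = 1 := Nat.odd_iff.mp hodd
  -- x is odd
  have hxsq : Odd (x ^ 2) := by
    rw [← heq]
    exact ((hodd.pow).add_odd (hodd.pow)).add_one
  have hxodd : Odd x := by
    rcases Nat.even_or_odd x with h | h
    · exact absurd ((Nat.even_pow' (by norm_num)).mpr h) (Nat.not_even_iff_odd.mpr hxsq)
    · exact h
  obtain ⟨k, hk⟩ := hxodd
  have hx4 : x ^ 2 % 4 = 1 := by
    have : x ^ 2 = 4 * (k * k + k) + 1 := by rw [hk]; ring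
    omega
  have hpa : p ^ a % 4 = (p % 4) ^ a % 4 := Nat.pow_mod p a 4
  have hpb : p ^ b % 4 = (p % 4) ^ b % 4 := Nat.pow_mod p b 4
  have hcase : p % 4 = 1 ∨ p % 4 = 3 := by omega
  have hp4 : p % 4 = 3 := by
    rcases hcase with h | h
    · rw [h] at hpa hpb; simp at hpa hpb; omega
    · exact h
  rw [hp4, pow3mod4, if_neg (Nat.not_even_iff_odd.mpr haodd)] at hpa
  refine ⟨hp4, ?_⟩
  by_contra hbne
  rw [hp4, pow3mod4, if_neg hbne] at hpb
  omega
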